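/- Let T, the constants, and a gadget system satisfying (G1)–(G9) be as in the context, and let C₂ ⊆ A₁ be such that for every α ∈ C₂, s ∈ S(α) and ν ∈ {+,−}, the set N^ν_okay(s) ∩ W(C₂ ∖ {α}) contains at least φ₂kt vertices u satisfying |N^μ_good(u) ∩ W(C₂ ∖ {α})| ≥ φ₂kt for both μ ∈ {+,−}. Then there is a subset C₃ ⊆ C₂ of size at least |C₂|/(6^4 ρ^4) such that for every α ∈ C₃, every s ∈ S(α) and every ν ∈ {+,−}: the set N^ν_okay(s) ∩ W(C₃ ∖ {α}) contains at least φ₃kt vertices u such that, for each μ ∈ {+,−}, the set N^μ_good(u) ∩ W(C₃ ∖ {α}) contains at least φ₃kt vertices v with |N⁻_good(v) ∩ W(C₃ ∖ {α})| ≥ φ₃kt. -/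

import Mathlib

open Finset

namespace TournamentPartition

/-! ### Basic constants from the paper -/

def rho : ℕ := 10 ^ 4
def sigma1 : ℕ := 10 ^ 60
def sigma2 : ℕ := 10 ^ 4
def sigma3 : ℕ := 10

/-- `s` contains at least `m` elements satisfying `P`. -/
def ManyIn {α : Type*} (s : Finset α) (m : ℝ) (P : α → Prop) : Prop :=
  ∃ s' : Finset α, s' ⊆ s ∧ m ≤ (s'.card : ℝ) ∧ ∀ x ∈ s', P x

section Defs

variable {V I : Type*}

/-- `E u v` means that the edge between `u` and `v` is directed from `u` to `v`. -/
def IsTournament (E : V → V → Prop) : Prop :=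
  (∀ v, ¬ E v v) ∧ ∀ u v : V, u ≠ v → (E u v ↔ ¬ E v u)

/-- There is a directed path from `u` to `v` all of whose vertices lie in `S`. -/
def ReachWithin (E : V → V → Prop) (S : Set V) (u v : V) : Prop :=
  Relation.ReflTransGen (fun a b => a ∈ S ∧ b ∈ S ∧ E a b) u v

def StronglyConnectedOn (E : V → V → Prop) (S : Set V) : Prop :=
  ∀ u ∈ S, ∀ v ∈ S, ReachWithin E S u v

/-- A directed path, as a list of distinct vertices with consecutive edges. -/
def IsDiPath (E : V → V → Prop) (l : List V) : Prop :=
  l ≠ [] ∧ l.Nodup ∧ l.Chain' E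

variable [Fintype V] [DecidableEq V]

/-- The set `S` induces a strongly `k`-connected subtournament. -/
def StronglyKConnectedOn (E : V → V → Prop) (k : ℕ) (S : Finset V) : Prop :=
  k + 1 ≤ S.card ∧
    ∀ Z : Finset V, Z.card ≤ k → StronglyConnectedOn E ((S \ Z : Finset V) : Set V)

def StronglyKConnected (E : V → V → Prop) (k : ℕ) : Prop :=
  StronglyKConnectedOn E k Finset.univ

def outN (E : V → V → Prop) [DecidableRel E] (u : V) : Finset V :=
  Finset.univ.filter fun v => E u v

def inN (E : V → V → Prop) [DecidableRel E] (u : V) : Finset V :=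
  Finset.univ.filter fun v => E v u

/-- A system of gadgets `U(α)` with special sets `S⁺(α), S⁻(α) ⊆ S(α) ⊆ U(α)`,
exceptional sets `X(α)` and special vertices `s⁺(α), s⁻(α) ∈ S(α)`. -/
structure GadgetSystem (V I : Type*) where
  U : I → Finset V
  S : I → Finset V
  Sp : I → Finset V
  Sm : I → Finset V
  X : I → Finset V
  sp : I → V
  sm : I → V
  sp_mem : ∀ α, sp α ∈ S α
  sm_mem : ∀ α, sm α ∈ S α
  Sp_subset : ∀ α, Sp α ⊆ S α
  Sm_subset : ∀ α, Sm α ⊆ S α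
  S_subset : ∀ α, S α ⊆ U α

variable [Fintype I] [DecidableEq I]

def Vokay (G : GadgetSystem V I) : Finset V :=
  Finset.univ \ Finset.univ.biUnion G.S

/-- Vertices of `V_okay` having no out-neighbour in `S⁻(α)` for at least `k*t` indices `α`. -/
def VbadP (E : V → V → Prop) [DecidableRel E] (G : GadgetSystem V I) (k t : ℕ) : Finset V :=
  (Vokay G).filter fun u =>
    k * t ≤ (Finset.univ.filter fun α : I => ∀ v ∈ G.Sm α, ¬ E u v).card

/-- Vertices of `V_okay` having no in-neighbour in `S⁺(α)` for at least `k*t` indices `α`. -/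
def VbadM (E : V → V → Prop) [DecidableRel E] (G : GadgetSystem V I) (k t : ℕ) : Finset V :=
  (Vokay G).filter fun u =>
    k * t ≤ (Finset.univ.filter fun α : I => ∀ v ∈ G.Sp α, ¬ E v u).card

def Vbad (E : V → V → Prop) [DecidableRel E] (G : GadgetSystem V I) (k t : ℕ) : Finset V :=
  VbadP E G k t ∩ VbadM E G k t

def VgoodP (E : V → V → Prop) [DecidableRel E] (G : GadgetSystem V I) (k t : ℕ) : Finset V :=
  Vokay G \ VbadP E G k t

def VgoodM (E : V → V → Prop) [DecidableRel E] (G : GadgetSystem V I) (k t : ℕ) : Finset V :=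
  Vokay G \ VbadM E G k t

def Vgood (E : V → V → Prop) [DecidableRel E] (G : GadgetSystem V I) (k t : ℕ) : Finset V :=
  VgoodP E G k t ∩ VgoodM E G k t

/-- `W(C) = V ∖ ⋃_{α ∈ C} U(α)`. -/
def Wof (G : GadgetSystem V I) (C : Finset I) : Finset V :=
  Finset.univ \ C.biUnion G.U

def NokayP (E : V → V → Prop) [DecidableRel E] (G : GadgetSystem V I) (u : V) : Finset V :=
  outN E u ∩ Vokay G

def NokayM (E : V → V → Prop) [DecidableRel E] (G : GadgetSystem V I) (u : V) : Finset V :=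
  inN E u ∩ Vokay G

def NgoodP (E : V → V → Prop) [DecidableRel E] (G : GadgetSystem V I) (k t : ℕ) (u : V) :
    Finset V :=
  outN E u ∩ VgoodP E G k t

def NgoodM (E : V → V → Prop) [DecidableRel E] (G : GadgetSystem V I) (k t : ℕ) (u : V) :
    Finset V :=
  inN E u ∩ Vgood E G k t

/-! ### Properties (G1)–(G9) -/

def CondG1 (G : GadgetSystem V I) : Prop :=
  ∀ α β : I, α ≠ β → Disjoint (G.U α) (G.U β)

def CondG2 (G : GadgetSystem V I) (k t : ℕ) : Prop :=
  ∀ α : I, (G.S α).card ≤ rho ∧ (G.X α).card ≤ rho * sigma1 * k * t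

def CondG3 (E : V → V → Prop) (G : GadgetSystem V I) : Prop :=
  ∀ α : I, ∀ u ∈ G.Sm α, ∀ v ∈ G.Sp α, ReachWithin E (G.U α : Set V) u v

def CondG4 (E : V → V → Prop) (G : GadgetSystem V I) : Prop :=
  ∀ α : I, ∀ x : V, x ∉ G.X α →
    (E x (G.sp α) → ∀ u ∈ G.U α \ G.S α, E x u) ∧
    (E (G.sm α) x → ∀ u ∈ G.U α \ G.S α, E u x)

def CondG5 (E : V → V → Prop) [DecidableRel E] (G : GadgetSystem V I) (k t : ℕ) : Prop :=
  ∀ u ∈ Vokay G,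
    10 ^ 12 * (VbadP E G k t).card ≤ (outN E u).card ∧
    10 ^ 12 * (VbadM E G k t).card ≤ (inN E u).card

/-- Properties (G1)–(G5) of a gadget system. -/
def GadgetHyp (E : V → V → Prop) [DecidableRel E] (G : GadgetSystem V I) (k t : ℕ) : Prop :=
  CondG1 G ∧ CondG2 G k t ∧ CondG3 E G ∧ CondG4 E G ∧ CondG5 E G k t

def CondG6 (E : V → V → Prop) [DecidableRel E] (G : GadgetSystem V I) (k t : ℕ) : Prop :=
  (Fintype.card V : ℝ) / 2 ≤ ((Vgood E G k t).card : ℝ)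

def CondG7 (E : V → V → Prop) [DecidableRel E] (G : GadgetSystem V I) (k t τ₁ : ℕ) : Prop :=
  ∀ u ∈ Vokay G,
    max ((10 : ℝ) ^ 11 * ((VbadP E G k t).card : ℝ)) (((τ₁ * k * t : ℕ) : ℝ) / 2)
      ≤ ((outN E u ∩ VgoodP E G k t).card : ℝ)

def CondG8 (E : V → V → Prop) [DecidableRel E] (G : GadgetSystem V I) (k t τ₁ : ℕ) : Prop :=
  ∀ u ∈ Vokay G,
    max ((10 : ℝ) ^ 11 * ((VbadM E G k t).card : ℝ)) (((τ₁ * k * t : ℕ) : ℝ) / 2)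
      ≤ ((inN E u ∩ Vgood E G k t).card : ℝ)

def CondG9 (E : V → V → Prop) [DecidableRel E] (G : GadgetSystem V I) (k t τ₁ : ℕ) : Prop :=
  ∀ u : V,
    max ((10 : ℝ) ^ 11 * (((Finset.univ \ Vokay G).card : ℕ) : ℝ)) (((τ₁ * k * t : ℕ) : ℝ) / 2)
      ≤ ((outN E u ∩ Vokay G).card : ℝ) ∧
    max ((10 : ℝ) ^ 11 * (((Finset.univ \ Vokay G).card : ℕ) : ℝ)) (((τ₁ * k * t : ℕ) : ℝ) / 2)
      ≤ ((inN E u ∩ Vokay G).card : ℝ)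

/-- Properties (G6)–(G9) of a gadget system. -/
def GadgetHyp2 (E : V → V → Prop) [DecidableRel E] (G : GadgetSystem V I) (k t τ₁ : ℕ) :
    Prop :=
  CondG6 E G k t ∧ CondG7 E G k t τ₁ ∧ CondG8 E G k t τ₁ ∧ CondG9 E G k t τ₁

/-! ### Available vertices -/

def AvailA1 (E : V → V → Prop) [DecidableRel E] (G : GadgetSystem V I) (k t : ℕ)
    (W : Finset V) (u : V) : Prop :=
  u ∈ Vgood E G k t ∩ W

def AvailA2 (E : V → V → Prop) [DecidableRel E] (G : GadgetSystem V I) (k t τ₂ : ℕ)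
    (W : Finset V) (u : V) : Prop :=
  u ∈ (VgoodP E G k t \ VgoodM E G k t) ∩ W ∧
    ManyIn (inN E u) ((τ₂ * k * t : ℕ) : ℝ) (AvailA1 E G k t W)

def AvailA3 (E : V → V → Prop) [DecidableRel E] (G : GadgetSystem V I) (k t τ₂ : ℕ)
    (W : Finset V) (u : V) : Prop :=
  u ∈ (VgoodM E G k t \ VgoodP E G k t) ∩ W ∧
    ManyIn (outN E u) ((τ₂ * k * t : ℕ) : ℝ)
      (fun v => AvailA1 E G k t W v ∨ AvailA2 E G k t τ₂ W v)

def AvailA4 (E : V → V → Prop) [DecidableRel E] (G : GadgetSystem V I) (k t τ₂ : ℕ)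
    (W : Finset V) (u : V) : Prop :=
  u ∈ Vbad E G k t ∩ W ∧
    ManyIn (outN E u) ((τ₂ * k * t : ℕ) : ℝ)
      (fun v => AvailA1 E G k t W v ∨ AvailA2 E G k t τ₂ W v) ∧
    ManyIn (inN E u) ((τ₂ * k * t : ℕ) : ℝ) (AvailA1 E G k t W)

/-- `u` is available (for `α`) with respect to a family `𝒜`, where `W = W(𝒜 ∖ {α})`. -/
def Available (E : V → V → Prop) [DecidableRel E] (G : GadgetSystem V I) (k t τ₂ : ℕ)
    (W : Finset V) (u : V) : Prop :=
  AvailA1 E G k t W u ∨ AvailA2 E G k t τ₂ W u ∨ AvailA3 E G k t τ₂ W u ∨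
    AvailA4 E G k t τ₂ W u

/-! ### Eligible and helpful vertices -/

/-- Indices `α ∈ 𝒜` such that `u` has no out-neighbour in `S⁻(α)`. -/
def MissOut (E : V → V → Prop) [DecidableRel E] (G : GadgetSystem V I) (𝒜 : Finset I)
    (u : V) : Finset I :=
  𝒜.filter fun α => ∀ v ∈ G.Sm α, ¬ E u v

/-- Indices `α ∈ 𝒜` such that `u` has no in-neighbour in `S⁺(α)`. -/
def MissIn (E : V → V → Prop) [DecidableRel E] (G : GadgetSystem V I) (𝒜 : Finset I)
    (u : V) : Finset I :=
  𝒜.filter fun α => ∀ v ∈ G.Sp α, ¬ E v u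

def Nice1 (E : V → V → Prop) [DecidableRel E] (G : GadgetSystem V I) (k t : ℕ)
    (𝒜 : Finset I) (W : Finset V) (u : V) : Prop :=
  u ∈ Vgood E G k t ∩ W ∧ (MissOut E G 𝒜 u).card ≤ k ∧ (MissIn E G 𝒜 u).card ≤ k

def Nice2 (E : V → V → Prop) [DecidableRel E] (G : GadgetSystem V I) (k t : ℕ) (m : ℝ)
    (𝒜 : Finset I) (W : Finset V) (u : V) : Prop :=
  u ∈ (VgoodP E G k t \ VgoodM E G k t) ∩ W ∧ (MissOut E G 𝒜 u).card ≤ k ∧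
    ManyIn (inN E u) m (Nice1 E G k t 𝒜 W)

def Nice3 (E : V → V → Prop) [DecidableRel E] (G : GadgetSystem V I) (k t : ℕ) (m : ℝ)
    (𝒜 : Finset I) (W : Finset V) (u : V) : Prop :=
  u ∈ (VgoodM E G k t \ VgoodP E G k t) ∩ W ∧ (MissIn E G 𝒜 u).card ≤ k ∧
    ManyIn (outN E u) m (fun v => Nice1 E G k t 𝒜 W v ∨ Nice2 E G k t m 𝒜 W v)

def Nice4 (E : V → V → Prop) [DecidableRel E] (G : GadgetSystem V I) (k t : ℕ) (m : ℝ)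
    (𝒜 : Finset I) (W : Finset V) (u : V) : Prop :=
  u ∈ Vbad E G k t ∩ W ∧
    ManyIn (inN E u) m (Nice1 E G k t 𝒜 W) ∧
    ManyIn (outN E u) m (fun v => Nice1 E G k t 𝒜 W v ∨ Nice2 E G k t m 𝒜 W v)

def NiceFor (E : V → V → Prop) [DecidableRel E] (G : GadgetSystem V I) (k t : ℕ) (m : ℝ)
    (𝒜 : Finset I) (W : Finset V) (u : V) : Prop :=
  Nice1 E G k t 𝒜 W u ∨ Nice2 E G k t m 𝒜 W u ∨ Nice3 E G k t m 𝒜 W u ∨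
    Nice4 E G k t m 𝒜 W u

/-- `u` is eligible for `𝒜` in `W`. -/
def Eligible (E : V → V → Prop) [DecidableRel E] (G : GadgetSystem V I) (k t τ₃ : ℕ)
    (𝒜 : Finset I) (W : Finset V) (u : V) : Prop :=
  NiceFor E G k t ((τ₃ * k * t : ℕ) : ℝ) 𝒜 W u

/-- `u` is helpful for `𝒜` in `W`. -/
def Helpful (E : V → V → Prop) [DecidableRel E] (G : GadgetSystem V I) (k t : ℕ)
    (𝒜 : Finset I) (W : Finset V) (u : V) : Prop :=
  NiceFor E G k t (k : ℝ) 𝒜 W u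

end Defs

noncomputable def phi0 (τ₁ : ℕ) : ℝ := (τ₁ : ℝ) / 4
noncomputable def phi1 (τ₁ : ℕ) : ℝ := phi0 τ₁ / (2 ^ 6 * (rho : ℝ))
noncomputable def phi2 (τ₁ : ℕ) : ℝ := phi1 τ₁ / (2 ^ 14 * (rho : ℝ) ^ 2)
noncomputable def phi3 (τ₁ : ℕ) : ℝ := phi2 τ₁ / (2 ^ 14 * (rho : ℝ) ^ 2)

/-! ### Auxiliary material for Statement 9 -/

section Aux9

open Classical in
/-- The predicate on `v` appearing innermost in the conclusion of Statement 9. -/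
def RichP {V I : Type*} [Fintype V] [DecidableEq V] [Fintype I] [DecidableEq I]
    (E : V → V → Prop) [DecidableRel E] (G : GadgetSystem V I) (k t : ℕ) (φ : ℝ)
    (Wset : Finset V) (v : V) : Prop :=
  φ ≤ ((NgoodM E G k t v ∩ Wset).card : ℝ)

/-- The predicate on `u` appearing in the conclusion of Statement 9. -/
def UP {V I : Type*} [Fintype V] [DecidableEq V] [Fintype I] [DecidableEq I]
    (E : V → V → Prop) [DecidableRel E] (G : GadgetSystem V I) (k t : ℕ) (φ : ℝ)
    (Wset : Finset V) (u : V) : Prop :=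
  ManyIn (NgoodP E G k t u ∩ Wset) φ (RichP E G k t φ Wset) ∧
    ManyIn (NgoodM E G k t u ∩ Wset) φ (RichP E G k t φ Wset)

/-- The conclusion of Statement 9 for a single index `α`, with window `Wset`. -/
def ConclP {V I : Type*} [Fintype V] [DecidableEq V] [Fintype I] [DecidableEq I]
    (E : V → V → Prop) [DecidableRel E] (G : GadgetSystem V I) (k t : ℕ) (φ : ℝ)
    (Wset : Finset V) (α : I) : Prop :=
  ∀ s ∈ G.S α,
    ManyIn (NokayP E G s ∩ Wset) φ (UP E G k t φ Wset) ∧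
      ManyIn (NokayM E G s ∩ Wset) φ (UP E G k t φ Wset)

variable {V I : Type*} [Fintype V] [DecidableEq V] [Fintype I] [DecidableEq I]

set_option linter.unusedSectionVars false

lemma manyIn_mono {γ : Type*} {s s' : Finset γ} {m m' : ℝ} {P Q : γ → Prop}
    (hs : s ⊆ s') (hm : m' ≤ m) (hPQ : ∀ x, P x → Q x) :
    ManyIn s m P → ManyIn s' m' Q := by
  rintro ⟨w, hw, hc, hp⟩
  exact ⟨w, hw.trans hs, hm.trans hc, fun x hx => hPQ x (hp x hx)⟩

lemma Wof_anti (G : GadgetSystem V I) {C C' : Finset I} (h : C ⊆ C') :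
    Wof G C' ⊆ Wof G C := by
  intro x hx
  simp only [Wof, mem_sdiff, mem_univ, true_and, mem_biUnion] at hx ⊢
  rintro ⟨β, hβ, hxβ⟩
  exact hx ⟨β, h hβ, hxβ⟩

lemma richP_mono (E : V → V → Prop) [DecidableRel E] (G : GadgetSystem V I) (k t : ℕ)
    {φ : ℝ} {Wset Wset' : Finset V} (h : Wset ⊆ Wset') {v : V}
    (hv : RichP E G k t φ Wset v) : RichP E G k t φ Wset' v := by
  refine hv.trans ?_
  exact_mod_cast Nat.cast_le.mpr (card_le_card (inter_subset_inter (Finset.Subset.refl _) h))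

lemma uP_mono (E : V → V → Prop) [DecidableRel E] (G : GadgetSystem V I) (k t : ℕ)
    {φ : ℝ} {Wset Wset' : Finset V} (h : Wset ⊆ Wset') {u : V}
    (hu : UP E G k t φ Wset u) : UP E G k t φ Wset' u := by
  obtain ⟨h1, h2⟩ := hu
  constructor
  · exact manyIn_mono (inter_subset_inter (Finset.Subset.refl _) h) le_rfl
      (fun v hv => richP_mono E G k t h hv) h1
  · exact manyIn_mono (inter_subset_inter (Finset.Subset.refl _) h) le_rfl
      (fun v hv => richP_mono E G k t h hv) h2

lemma conclP_mono (E : V → V → Prop) [DecidableRel E] (G : GadgetSystem V I) (k t : ℕ)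
    {φ : ℝ} {Wset Wset' : Finset V} (h : Wset ⊆ Wset') {α : I}
    (hα : ConclP E G k t φ Wset α) : ConclP E G k t φ Wset' α := by
  intro s hs
  obtain ⟨h1, h2⟩ := hα s hs
  constructor
  · exact manyIn_mono (inter_subset_inter (Finset.Subset.refl _) h) le_rfl
      (fun u hu => uP_mono E G k t h hu) h1
  · exact manyIn_mono (inter_subset_inter (Finset.Subset.refl _) h) le_rfl
      (fun u hu => uP_mono E G k t h hu) h2

/-- Markov-type inequality for counting. -/
lemma markov_count {ι : Type*} (𝒟 : Finset ι) (p : ι → Prop) [DecidablePred p]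
    (f : ι → ℝ) (c : ℝ) (hf : ∀ i ∈ 𝒟, 0 ≤ f i) (h : ∀ i ∈ 𝒟, p i → c ≤ f i) :
    c * ((𝒟.filter p).card : ℝ) ≤ ∑ i ∈ 𝒟, f i := by
  calc c * ((𝒟.filter p).card : ℝ) = ∑ _i ∈ 𝒟.filter p, c := by
        rw [sum_const, nsmul_eq_mul, mul_comm]
    _ ≤ ∑ i ∈ 𝒟.filter p, f i :=
        sum_le_sum fun i hi => h i (mem_of_mem_filter i hi) (mem_filter.mp hi).2
    _ ≤ ∑ i ∈ 𝒟, f i :=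
        sum_le_sum_of_subset_of_nonneg (filter_subset _ _) fun i hi _ => hf i hi

lemma card_filter_le_sum_card_filter {ι κ : Type*} [DecidableEq ι] (𝒟 : Finset ι)
    (T : Finset κ) (q : ι → Prop) [DecidablePred q] (q' : κ → ι → Prop)
    [∀ s, DecidablePred (q' s)] (h : ∀ D ∈ 𝒟, q D → ∃ s ∈ T, q' s D) :
    (𝒟.filter q).card ≤ ∑ s ∈ T, (𝒟.filter (q' s)).card := by
  calc (𝒟.filter q).card ≤ (T.biUnion fun s => 𝒟.filter (q' s)).card := by
        apply card_le_card
        intro D hD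
        obtain ⟨hD𝒟, hq⟩ := mem_filter.mp hD
        obtain ⟨s, hs, hqs⟩ := h D hD𝒟 hq
        exact mem_biUnion.mpr ⟨s, hs, mem_filter.mpr ⟨hD𝒟, hqs⟩⟩
    _ ≤ ∑ s ∈ T, (𝒟.filter (q' s)).card := card_biUnion_le

lemma card_filter_mem_powersetCard_le {ι : Type*} [DecidableEq ι] (S : Finset ι)
    (r : ℕ) (β : ι) (hβ : β ∈ S) [DecidablePred fun D : Finset ι => β ∈ D] :
    (((S.powersetCard r).filter fun D => β ∈ D).card) ≤ (S.card - 1).choose (r - 1) := by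
  rw [← card_erase_of_mem hβ, ← Finset.card_powersetCard (r - 1) (S.erase β)]
  apply card_le_card_of_injOn (fun D => D.erase β)
  · intro D hD
    obtain ⟨hD1, hβD⟩ := mem_filter.mp hD
    obtain ⟨hsub, hcard⟩ := mem_powersetCard.mp hD1
    exact mem_powersetCard.mpr ⟨erase_subset_erase β hsub, by rw [card_erase_of_mem hβD, hcard]⟩
  · intro D hD D' hD' hDD'
    have hβD : β ∈ D := (mem_filter.mp (Finset.mem_coe.mp hD)).2
    have hβD' : β ∈ D' := (mem_filter.mp (Finset.mem_coe.mp hD')).2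
    have := congrArg (insert β) hDD'
    rwa [insert_erase hβD, insert_erase hβD'] at this

open Classical in
/-- Level 3: for a fixed vertex `v` of large in-good-degree, the number of `r`-subsets `D`
of `S` for which `v` is poor (has few surviving in-good-neighbours) is at most `2 * Mb`. -/
lemma level3 (E : V → V → Prop) [DecidableRel E] (G : GadgetSystem V I) (k t : ℕ)
    (hG1 : CondG1 G) (S : Finset I) (r : ℕ) (Mb : ℝ) (hMb0 : 0 ≤ Mb)
    (hMb : ∀ β ∈ S, (((S.powersetCard r).filter fun D => β ∈ D).card : ℝ) ≤ Mb)
    (φ₃ T : ℝ) (h3pos : 0 < φ₃) (h3T : 4 * φ₃ ≤ T) (v : V)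
    (hdv : T / 2 ≤ ((NgoodM E G k t v).card : ℝ)) :
    ((((S.powersetCard r).filter fun D =>
        ¬ (φ₃ ≤ (((NgoodM E G k t v) ∩ Wof G D).card : ℝ))).card : ℝ)) ≤ 2 * Mb := by
  set Y := NgoodM E G k t v with hY
  set dv := (Y.card : ℝ) with hdvdef
  have hdvpos : 0 < dv := lt_of_lt_of_le (by linarith) hdv
  have hpoor : ∀ D ∈ S.powersetCard r,
      (¬ (φ₃ ≤ ((Y ∩ Wof G D).card : ℝ))) →
      dv / 2 ≤ ∑ β ∈ D, ((Y ∩ G.U β).card : ℝ) := by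
    intro D hD hpoorD
    push_neg at hpoorD
    have hsplit : Y.card ≤ (Y ∩ Wof G D).card + ∑ β ∈ D, (Y ∩ G.U β).card := by
      calc Y.card ≤ ((Y ∩ Wof G D) ∪ D.biUnion fun β => Y ∩ G.U β).card := by
            apply card_le_card
            intro x hx
            by_cases hxW : x ∈ Wof G D
            · exact mem_union_left _ (mem_inter.mpr ⟨hx, hxW⟩)
            · have hxB : x ∈ D.biUnion G.U := by
                by_contra hxB
                exact hxW (mem_sdiff.mpr ⟨mem_univ x, hxB⟩)
              obtain ⟨β, hβ, hxβ⟩ := mem_biUnion.mp hxB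
              exact mem_union_right _ (mem_biUnion.mpr ⟨β, hβ, mem_inter.mpr ⟨hx, hxβ⟩⟩)
        _ ≤ (Y ∩ Wof G D).card + (D.biUnion fun β => Y ∩ G.U β).card := card_union_le _ _
        _ ≤ (Y ∩ Wof G D).card + ∑ β ∈ D, (Y ∩ G.U β).card :=
            Nat.add_le_add_left card_biUnion_le _
    have hsplit' : dv ≤ ((Y ∩ Wof G D).card : ℝ) + ∑ β ∈ D, ((Y ∩ G.U β).card : ℝ) := by
      rw [hdvdef]
      exact_mod_cast hsplit
    linarith
  have key := markov_count (S.powersetCard r) _ (fun D => ∑ β ∈ D, ((Y ∩ G.U β).card : ℝ))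
      (dv / 2) (fun D _ => sum_nonneg fun β _ => by positivity) hpoor
  have hswap : ∑ D ∈ S.powersetCard r, ∑ β ∈ D, ((Y ∩ G.U β).card : ℝ)
      = ∑ β ∈ S, ((Y ∩ G.U β).card : ℝ) *
          (((S.powersetCard r).filter fun D => β ∈ D).card : ℝ) := by
    have h1 : ∀ D ∈ S.powersetCard r, ∑ β ∈ D, ((Y ∩ G.U β).card : ℝ)
        = ∑ β ∈ S, if β ∈ D then ((Y ∩ G.U β).card : ℝ) else 0 := by
      intro D hD
      rw [Finset.sum_ite_mem]
      exact (Finset.sum_congr (inter_eq_right.mpr (mem_powersetCard.mp hD).1).symm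
        fun _ _ => rfl)
    rw [Finset.sum_congr rfl h1, Finset.sum_comm]
    refine Finset.sum_congr rfl fun β _ => ?_
    rw [← Finset.sum_filter, Finset.sum_const, nsmul_eq_mul, mul_comm]
  have hdisjsum : ∑ β ∈ S, ((Y ∩ G.U β).card : ℝ) ≤ dv := by
    have hdisj : ∀ β ∈ S, ∀ γ ∈ S, β ≠ γ → Disjoint (Y ∩ G.U β) (Y ∩ G.U γ) :=
      fun β _ γ _ hne => (hG1 β γ hne).mono inter_subset_right inter_subset_right
    have h2 : ∑ β ∈ S, (Y ∩ G.U β).card = (S.biUnion fun β => Y ∩ G.U β).card :=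
      (card_biUnion hdisj).symm
    have hsub : (S.biUnion fun β => Y ∩ G.U β) ⊆ Y := by
      intro x hx
      obtain ⟨β, _, hxβ⟩ := mem_biUnion.mp hx
      exact (mem_inter.mp hxβ).1
    have h3 : ∑ β ∈ S, (Y ∩ G.U β).card ≤ Y.card := h2 ▸ card_le_card hsub
    rw [hdvdef]
    exact_mod_cast h3
  have hβbound : ∑ β ∈ S, ((Y ∩ G.U β).card : ℝ) *
      (((S.powersetCard r).filter fun D => β ∈ D).card : ℝ) ≤ Mb * dv := by
    calc ∑ β ∈ S, ((Y ∩ G.U β).card : ℝ) *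
          (((S.powersetCard r).filter fun D => β ∈ D).card : ℝ)
        ≤ ∑ β ∈ S, ((Y ∩ G.U β).card : ℝ) * Mb :=
          sum_le_sum fun β hβ => mul_le_mul_of_nonneg_left (hMb β hβ) (by positivity)
      _ = Mb * ∑ β ∈ S, ((Y ∩ G.U β).card : ℝ) := by rw [← sum_mul, mul_comm]
      _ ≤ Mb * dv := mul_le_mul_of_nonneg_left hdisjsum hMb0
  have hP0 : (0:ℝ) ≤ (((S.powersetCard r).filter fun D =>
      ¬ (φ₃ ≤ (((NgoodM E G k t v) ∩ Wof G D).card : ℝ))).card : ℝ) := Nat.cast_nonneg _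
  nlinarith [key, hswap, hβbound, hdvpos, hP0]

open Classical in
/-- Level 2: for a fixed pool `P` of okay vertices of size at least `φ₂`, the number of
`r`-subsets `D` of `S` for which `P` contains fewer than `φ₃` rich vertices is at most
`4 * Mb`. -/
lemma level2 (E : V → V → Prop) [DecidableRel E] (G : GadgetSystem V I) (k t : ℕ)
    (hG1 : CondG1 G) (S : Finset I) (r : ℕ) (Mb : ℝ) (hMb0 : 0 ≤ Mb)
    (hMb : ∀ β ∈ S, (((S.powersetCard r).filter fun D => β ∈ D).card : ℝ) ≤ Mb)
    (φ₂ φ₃ T : ℝ) (h3pos : 0 < φ₃) (h32 : 2 * φ₃ ≤ φ₂) (h3T : 4 * φ₃ ≤ T)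
    (hG8' : ∀ u ∈ Vokay G, T / 2 ≤ ((NgoodM E G k t u).card : ℝ))
    (P : Finset V) (hPc : φ₂ ≤ (P.card : ℝ)) (hPok : ∀ v ∈ P, v ∈ Vokay G) :
    ((((S.powersetCard r).filter fun D =>
        ¬ (φ₃ ≤ ((P.filter fun v =>
          φ₃ ≤ ((NgoodM E G k t v ∩ Wof G D).card : ℝ)).card : ℝ))).card : ℝ))
      ≤ 4 * Mb := by
  have hPpos : (0:ℝ) < (P.card : ℝ) := by linarith
  have hfail : ∀ D ∈ S.powersetCard r,
      (¬ (φ₃ ≤ ((P.filter fun v =>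
          φ₃ ≤ ((NgoodM E G k t v ∩ Wof G D).card : ℝ)).card : ℝ))) →
      (P.card : ℝ) / 2 ≤ ((P.filter fun v =>
          ¬ (φ₃ ≤ ((NgoodM E G k t v ∩ Wof G D).card : ℝ))).card : ℝ) := by
    intro D _ h
    push_neg at h
    have hsum := card_filter_add_card_filter_not
      (s := P) (p := fun v => φ₃ ≤ ((NgoodM E G k t v ∩ Wof G D).card : ℝ))
    have hsum' : ((P.filter fun v =>
          φ₃ ≤ ((NgoodM E G k t v ∩ Wof G D).card : ℝ)).card : ℝ)
        + ((P.filter fun v =>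
          ¬ (φ₃ ≤ ((NgoodM E G k t v ∩ Wof G D).card : ℝ))).card : ℝ) = (P.card : ℝ) := by
      exact_mod_cast hsum
    linarith
  have key := markov_count (S.powersetCard r) _
      (fun D => ((P.filter fun v =>
          ¬ (φ₃ ≤ ((NgoodM E G k t v ∩ Wof G D).card : ℝ))).card : ℝ))
      ((P.card : ℝ) / 2) (fun D _ => Nat.cast_nonneg _) hfail
  have hswapN : ∑ D ∈ S.powersetCard r, (P.filter fun v =>
        ¬ (φ₃ ≤ ((NgoodM E G k t v ∩ Wof G D).card : ℝ))).card
      = ∑ v ∈ P, ((S.powersetCard r).filter fun D =>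
        ¬ (φ₃ ≤ ((NgoodM E G k t v ∩ Wof G D).card : ℝ))).card := by
    simp_rw [card_filter]
    exact Finset.sum_comm
  have hlvl3 : ∀ v ∈ P, ((((S.powersetCard r).filter fun D =>
        ¬ (φ₃ ≤ ((NgoodM E G k t v ∩ Wof G D).card : ℝ))).card : ℝ)) ≤ 2 * Mb :=
    fun v hv => level3 E G k t hG1 S r Mb hMb0 hMb φ₃ T h3pos h3T v (hG8' v (hPok v hv))
  have hsum2 : ∑ D ∈ S.powersetCard r, ((P.filter fun v =>
        ¬ (φ₃ ≤ ((NgoodM E G k t v ∩ Wof G D).card : ℝ))).card : ℝ)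
      ≤ (P.card : ℝ) * (2 * Mb) := by
    calc ∑ D ∈ S.powersetCard r, ((P.filter fun v =>
          ¬ (φ₃ ≤ ((NgoodM E G k t v ∩ Wof G D).card : ℝ))).card : ℝ)
        = ∑ v ∈ P, ((((S.powersetCard r).filter fun D =>
          ¬ (φ₃ ≤ ((NgoodM E G k t v ∩ Wof G D).card : ℝ))).card : ℝ)) := by
          exact_mod_cast congrArg (Nat.cast : ℕ → ℝ) hswapN
      _ ≤ ∑ _v ∈ P, 2 * Mb := sum_le_sum hlvl3
      _ = (P.card : ℝ) * (2 * Mb) := by rw [sum_const, nsmul_eq_mul]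
  have hF0 : (0:ℝ) ≤ ((((S.powersetCard r).filter fun D =>
      ¬ (φ₃ ≤ ((P.filter fun v =>
        φ₃ ≤ ((NgoodM E G k t v ∩ Wof G D).card : ℝ)).card : ℝ))).card : ℝ)) :=
    Nat.cast_nonneg _
  nlinarith [key, hsum2, hPpos, hF0]

open Classical in
/-- `u` has at least `φ₃` rich elements in each of its two pools (relative to `D`). -/
def GoodU {V I : Type*} [Fintype V] [DecidableEq V] [Fintype I] [DecidableEq I]
    (E : V → V → Prop) [DecidableRel E] (G : GadgetSystem V I) (k t : ℕ) (φ₃ : ℝ)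
    (Wbig : Finset V) (D : Finset I) (u : V) : Prop :=
  (φ₃ ≤ (((NgoodP E G k t u ∩ Wbig).filter fun v =>
      φ₃ ≤ ((NgoodM E G k t v ∩ Wof G D).card : ℝ)).card : ℝ)) ∧
  (φ₃ ≤ (((NgoodM E G k t u ∩ Wbig).filter fun v =>
      φ₃ ≤ ((NgoodM E G k t v ∩ Wof G D).card : ℝ)).card : ℝ))

lemma mem_VgoodP_okay {E : V → V → Prop} [DecidableRel E] {G : GadgetSystem V I}
    {k t : ℕ} {v : V} (h : v ∈ VgoodP E G k t) : v ∈ Vokay G :=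
  (Finset.mem_sdiff.mp h).1

lemma mem_Vgood_okay {E : V → V → Prop} [DecidableRel E] {G : GadgetSystem V I}
    {k t : ℕ} {v : V} (h : v ∈ Vgood E G k t) : v ∈ Vokay G :=
  mem_VgoodP_okay (Finset.mem_inter.mp h).1

open Classical in
/-- Level 1: for a fixed candidate set `Xs` (an in/out-okay-neighbourhood of a vertex of
`S(α)`), the number of `r`-subsets `D` of `S` for which the conclusion of Statement 9
fails for this candidate set is at most `16 * Mb`. -/
lemma level1 (E : V → V → Prop) [DecidableRel E] (G : GadgetSystem V I) (k t : ℕ)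
    (hG1 : CondG1 G) (S : Finset I) (r : ℕ) (Mb : ℝ) (hMb0 : 0 ≤ Mb)
    (hMb : ∀ β ∈ S, (((S.powersetCard r).filter fun D => β ∈ D).card : ℝ) ≤ Mb)
    (φ₂ φ₃ T : ℝ) (h3pos : 0 < φ₃) (h32 : 2 * φ₃ ≤ φ₂) (h3T : 4 * φ₃ ≤ T)
    (hG8' : ∀ u ∈ Vokay G, T / 2 ≤ ((NgoodM E G k t u).card : ℝ))
    (Xs : Finset V)
    (hA : ManyIn (Xs ∩ Wof G S) φ₂ fun u =>
        φ₂ ≤ ((NgoodP E G k t u ∩ Wof G S).card : ℝ) ∧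
        φ₂ ≤ ((NgoodM E G k t u ∩ Wof G S).card : ℝ)) :
    ((((S.powersetCard r).filter fun D =>
        ¬ ManyIn (Xs ∩ Wof G D) φ₃ (UP E G k t φ₃ (Wof G D))).card : ℝ)) ≤ 16 * Mb := by
  obtain ⟨A, hAsub, hAcard, hAprop⟩ := hA
  have hApos : (0:ℝ) < (A.card : ℝ) := by linarith
  have hDsubS : ∀ D ∈ S.powersetCard r, D ⊆ S := fun D hD => (mem_powersetCard.mp hD).1
  have hgoodU_UP : ∀ D ∈ S.powersetCard r, ∀ u,
      GoodU E G k t φ₃ (Wof G S) D u → UP E G k t φ₃ (Wof G D) u := by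
    intro D hD u hu
    have hW : Wof G S ⊆ Wof G D := Wof_anti G (hDsubS D hD)
    constructor
    · refine ⟨(NgoodP E G k t u ∩ Wof G S).filter fun v =>
        φ₃ ≤ ((NgoodM E G k t v ∩ Wof G D).card : ℝ), ?_, hu.1, ?_⟩
      · exact (filter_subset _ _).trans (inter_subset_inter (Finset.Subset.refl _) hW)
      · intro v hv
        exact (mem_filter.mp hv).2
    · refine ⟨(NgoodM E G k t u ∩ Wof G S).filter fun v =>
        φ₃ ≤ ((NgoodM E G k t v ∩ Wof G D).card : ℝ), ?_, hu.2, ?_⟩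
      · exact (filter_subset _ _).trans (inter_subset_inter (Finset.Subset.refl _) hW)
      · intro v hv
        exact (mem_filter.mp hv).2
  have hfail : ∀ D ∈ S.powersetCard r,
      (¬ ManyIn (Xs ∩ Wof G D) φ₃ (UP E G k t φ₃ (Wof G D))) →
      (A.card : ℝ) / 2 ≤ ((A.filter fun u => ¬ GoodU E G k t φ₃ (Wof G S) D u).card : ℝ) := by
    intro D hD h
    by_contra hlt
    push_neg at hlt
    apply h
    refine ⟨A.filter fun u => GoodU E G k t φ₃ (Wof G S) D u, ?_, ?_, ?_⟩
    · exact (filter_subset _ _).trans (hAsub.trans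
        (inter_subset_inter (Finset.Subset.refl _) (Wof_anti G (hDsubS D hD))))
    · have hsum := card_filter_add_card_filter_not
        (s := A) (p := fun u => GoodU E G k t φ₃ (Wof G S) D u)
      have hsum' : ((A.filter fun u => GoodU E G k t φ₃ (Wof G S) D u).card : ℝ)
          + ((A.filter fun u => ¬ GoodU E G k t φ₃ (Wof G S) D u).card : ℝ)
          = (A.card : ℝ) := by exact_mod_cast hsum
      linarith
    · intro u hu
      exact hgoodU_UP D hD u (mem_filter.mp hu).2
  have key := markov_count (S.powersetCard r) _
      (fun D => ((A.filter fun u => ¬ GoodU E G k t φ₃ (Wof G S) D u).card : ℝ))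
      ((A.card : ℝ) / 2) (fun _ _ => Nat.cast_nonneg _) hfail
  have hswapN : ∑ D ∈ S.powersetCard r,
        (A.filter fun u => ¬ GoodU E G k t φ₃ (Wof G S) D u).card
      = ∑ u ∈ A, ((S.powersetCard r).filter fun D =>
        ¬ GoodU E G k t φ₃ (Wof G S) D u).card := by
    simp_rw [card_filter]
    exact Finset.sum_comm
  have hperu : ∀ u ∈ A, ((((S.powersetCard r).filter fun D =>
      ¬ GoodU E G k t φ₃ (Wof G S) D u).card : ℝ)) ≤ 8 * Mb := by
    intro u hu
    obtain ⟨hp1, hp2⟩ := hAprop u hu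
    have hsplit : ((S.powersetCard r).filter fun D =>
        ¬ GoodU E G k t φ₃ (Wof G S) D u)
        ⊆ ((S.powersetCard r).filter fun D =>
            ¬ (φ₃ ≤ (((NgoodP E G k t u ∩ Wof G S).filter fun v =>
              φ₃ ≤ ((NgoodM E G k t v ∩ Wof G D).card : ℝ)).card : ℝ)))
          ∪ ((S.powersetCard r).filter fun D =>
            ¬ (φ₃ ≤ (((NgoodM E G k t u ∩ Wof G S).filter fun v =>
              φ₃ ≤ ((NgoodM E G k t v ∩ Wof G D).card : ℝ)).card : ℝ))) := by
      intro D hD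
      obtain ⟨hD𝒟, hbad⟩ := mem_filter.mp hD
      rcases not_and_or.mp hbad with hb | hb
      · exact mem_union_left _ (mem_filter.mpr ⟨hD𝒟, hb⟩)
      · exact mem_union_right _ (mem_filter.mpr ⟨hD𝒟, hb⟩)
    have hok1 : ∀ v ∈ NgoodP E G k t u ∩ Wof G S, v ∈ Vokay G := by
      intro v hv
      exact mem_VgoodP_okay (Finset.mem_inter.mp (Finset.mem_inter.mp hv).1).2
    have hok2 : ∀ v ∈ NgoodM E G k t u ∩ Wof G S, v ∈ Vokay G := by
      intro v hv
      exact mem_Vgood_okay (Finset.mem_inter.mp (Finset.mem_inter.mp hv).1).2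
    have hl1 := level2 E G k t hG1 S r Mb hMb0 hMb φ₂ φ₃ T h3pos h32 h3T hG8'
      (NgoodP E G k t u ∩ Wof G S) hp1 hok1
    have hl2 := level2 E G k t hG1 S r Mb hMb0 hMb φ₂ φ₃ T h3pos h32 h3T hG8'
      (NgoodM E G k t u ∩ Wof G S) hp2 hok2
    have hcard := card_le_card hsplit
    have hcard2 := (card_union_le _ _).trans' hcard
    have : ((((S.powersetCard r).filter fun D =>
        ¬ GoodU E G k t φ₃ (Wof G S) D u).card : ℝ))
        ≤ (((S.powersetCard r).filter fun D =>
            ¬ (φ₃ ≤ (((NgoodP E G k t u ∩ Wof G S).filter fun v =>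
              φ₃ ≤ ((NgoodM E G k t v ∩ Wof G D).card : ℝ)).card : ℝ))).card : ℝ)
          + (((S.powersetCard r).filter fun D =>
            ¬ (φ₃ ≤ (((NgoodM E G k t u ∩ Wof G S).filter fun v =>
              φ₃ ≤ ((NgoodM E G k t v ∩ Wof G D).card : ℝ)).card : ℝ))).card : ℝ) := by
      exact_mod_cast hcard2
    linarith
  have hsum2 : ∑ D ∈ S.powersetCard r,
      ((A.filter fun u => ¬ GoodU E G k t φ₃ (Wof G S) D u).card : ℝ)
      ≤ (A.card : ℝ) * (8 * Mb) := by
    calc ∑ D ∈ S.powersetCard r,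
        ((A.filter fun u => ¬ GoodU E G k t φ₃ (Wof G S) D u).card : ℝ)
        = ∑ u ∈ A, ((((S.powersetCard r).filter fun D =>
            ¬ GoodU E G k t φ₃ (Wof G S) D u).card : ℝ)) := by
          exact_mod_cast congrArg (Nat.cast : ℕ → ℝ) hswapN
      _ ≤ ∑ _u ∈ A, 8 * Mb := sum_le_sum hperu
      _ = (A.card : ℝ) * (8 * Mb) := by rw [sum_const, nsmul_eq_mul]
  have hF0 : (0:ℝ) ≤ ((((S.powersetCard r).filter fun D =>
      ¬ ManyIn (Xs ∩ Wof G D) φ₃ (UP E G k t φ₃ (Wof G D))).card : ℝ)) := Nat.cast_nonneg _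
  nlinarith [key, hsum2, hApos, hF0]

open Classical in
/-- The per-index estimate: for `α` with its hypothesis from Statement 9, the number of
`r`-subsets `D` of `S` for which the conclusion fails is at most `32 ρ Mb`. -/
lemma perAlpha (E : V → V → Prop) [DecidableRel E] (G : GadgetSystem V I) (k t : ℕ)
    (hG1 : CondG1 G) (S : Finset I) (r : ℕ) (Mb : ℝ) (hMb0 : 0 ≤ Mb)
    (hMb : ∀ β ∈ S, (((S.powersetCard r).filter fun D => β ∈ D).card : ℝ) ≤ Mb)
    (φ₂ φ₃ T : ℝ) (h3pos : 0 < φ₃) (h32 : 2 * φ₃ ≤ φ₂) (h3T : 4 * φ₃ ≤ T)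
    (hG8' : ∀ u ∈ Vokay G, T / 2 ≤ ((NgoodM E G k t u).card : ℝ))
    (α : I) (hSρ : (G.S α).card ≤ rho)
    (hyp : ∀ s ∈ G.S α,
      ManyIn (NokayP E G s ∩ Wof G S) φ₂ (fun u =>
        φ₂ ≤ ((NgoodP E G k t u ∩ Wof G S).card : ℝ) ∧
        φ₂ ≤ ((NgoodM E G k t u ∩ Wof G S).card : ℝ)) ∧
      ManyIn (NokayM E G s ∩ Wof G S) φ₂ (fun u =>
        φ₂ ≤ ((NgoodP E G k t u ∩ Wof G S).card : ℝ) ∧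
        φ₂ ≤ ((NgoodM E G k t u ∩ Wof G S).card : ℝ))) :
    ((((S.powersetCard r).filter fun D => ¬ ConclP E G k t φ₃ (Wof G D) α).card : ℝ))
      ≤ 32 * (rho : ℝ) * Mb := by
  have hsplit := card_filter_le_sum_card_filter (S.powersetCard r) (G.S α)
    (fun D => ¬ ConclP E G k t φ₃ (Wof G D) α)
    (fun s D => ¬ ManyIn (NokayP E G s ∩ Wof G D) φ₃ (UP E G k t φ₃ (Wof G D)) ∨
                ¬ ManyIn (NokayM E G s ∩ Wof G D) φ₃ (UP E G k t φ₃ (Wof G D)))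
    (by
      intro D _ hq
      by_contra h2
      push_neg at h2
      refine hq fun s hs => ?_
      obtain ⟨ha, hb⟩ := h2 s hs
      exact ⟨ha, hb⟩)
  have hper : ∀ s ∈ G.S α,
      ((((S.powersetCard r).filter fun D =>
        ¬ ManyIn (NokayP E G s ∩ Wof G D) φ₃ (UP E G k t φ₃ (Wof G D)) ∨
        ¬ ManyIn (NokayM E G s ∩ Wof G D) φ₃ (UP E G k t φ₃ (Wof G D))).card : ℝ))
        ≤ 32 * Mb := by
    intro s hs
    obtain ⟨h1, h2⟩ := hyp s hs
    have e1 := level1 E G k t hG1 S r Mb hMb0 hMb φ₂ φ₃ T h3pos h32 h3T hG8'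
      (NokayP E G s) h1
    have e2 := level1 E G k t hG1 S r Mb hMb0 hMb φ₂ φ₃ T h3pos h32 h3T hG8'
      (NokayM E G s) h2
    have hsub : ((S.powersetCard r).filter fun D =>
        ¬ ManyIn (NokayP E G s ∩ Wof G D) φ₃ (UP E G k t φ₃ (Wof G D)) ∨
        ¬ ManyIn (NokayM E G s ∩ Wof G D) φ₃ (UP E G k t φ₃ (Wof G D)))
        ⊆ ((S.powersetCard r).filter fun D =>
            ¬ ManyIn (NokayP E G s ∩ Wof G D) φ₃ (UP E G k t φ₃ (Wof G D)))
          ∪ ((S.powersetCard r).filter fun D =>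
            ¬ ManyIn (NokayM E G s ∩ Wof G D) φ₃ (UP E G k t φ₃ (Wof G D))) := by
      intro D hD
      obtain ⟨hD𝒟, hb⟩ := mem_filter.mp hD
      rcases hb with hb | hb
      · exact mem_union_left _ (mem_filter.mpr ⟨hD𝒟, hb⟩)
      · exact mem_union_right _ (mem_filter.mpr ⟨hD𝒟, hb⟩)
    have hcard := (card_le_card hsub).trans (card_union_le _ _)
    have hcard' : ((((S.powersetCard r).filter fun D =>
        ¬ ManyIn (NokayP E G s ∩ Wof G D) φ₃ (UP E G k t φ₃ (Wof G D)) ∨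
        ¬ ManyIn (NokayM E G s ∩ Wof G D) φ₃ (UP E G k t φ₃ (Wof G D))).card : ℝ))
        ≤ ((((S.powersetCard r).filter fun D =>
            ¬ ManyIn (NokayP E G s ∩ Wof G D) φ₃ (UP E G k t φ₃ (Wof G D))).card : ℝ))
          + ((((S.powersetCard r).filter fun D =>
            ¬ ManyIn (NokayM E G s ∩ Wof G D) φ₃ (UP E G k t φ₃ (Wof G D))).card : ℝ)) := by
      exact_mod_cast hcard
    linarith
  have hsplit' : ((((S.powersetCard r).filter fun D =>
      ¬ ConclP E G k t φ₃ (Wof G D) α).card : ℝ))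
      ≤ ∑ s ∈ G.S α, ((((S.powersetCard r).filter fun D =>
        ¬ ManyIn (NokayP E G s ∩ Wof G D) φ₃ (UP E G k t φ₃ (Wof G D)) ∨
        ¬ ManyIn (NokayM E G s ∩ Wof G D) φ₃ (UP E G k t φ₃ (Wof G D))).card : ℝ)) := by
    exact_mod_cast hsplit
  calc ((((S.powersetCard r).filter fun D =>
      ¬ ConclP E G k t φ₃ (Wof G D) α).card : ℝ))
      ≤ ∑ s ∈ G.S α, ((((S.powersetCard r).filter fun D =>
        ¬ ManyIn (NokayP E G s ∩ Wof G D) φ₃ (UP E G k t φ₃ (Wof G D)) ∨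
        ¬ ManyIn (NokayM E G s ∩ Wof G D) φ₃ (UP E G k t φ₃ (Wof G D))).card : ℝ)) := hsplit'
    _ ≤ ∑ _s ∈ G.S α, 32 * Mb := sum_le_sum hper
    _ = ((G.S α).card : ℝ) * (32 * Mb) := by rw [sum_const, nsmul_eq_mul]
    _ ≤ (rho : ℝ) * (32 * Mb) := by
        apply mul_le_mul_of_nonneg_right _ (by positivity)
        exact_mod_cast hSρ
    _ = 32 * (rho : ℝ) * Mb := by ring

end Aux9

/-- Lemma 4.8. -/
theorem statement9 :
    ∃ C : ℕ, ∀ (τ₁ k t : ℕ), C ≤ τ₁ → C * τ₁ ≤ k → 2 ≤ t →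
      ∀ (V : Type) [Fintype V] [DecidableEq V] (E : V → V → Prop) [DecidableRel E],
        IsTournament E → StronglyKConnected E (τ₁ * k * t) →
        ∀ G : GadgetSystem V (Fin (sigma1 * k * t)),
          GadgetHyp E G k t → GadgetHyp2 E G k t τ₁ →
          ∀ C₂ : Finset (Fin (sigma1 * k * t)),
            (∀ α ∈ C₂, ∀ s ∈ G.S α,
              ManyIn (NokayP E G s ∩ Wof G (C₂.erase α)) (phi2 τ₁ * k * t)
                (fun u =>
                  phi2 τ₁ * k * t ≤
                    ((NgoodP E G k t u ∩ Wof G (C₂.erase α)).card : ℝ) ∧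
                  phi2 τ₁ * k * t ≤
                    ((NgoodM E G k t u ∩ Wof G (C₂.erase α)).card : ℝ)) ∧
              ManyIn (NokayM E G s ∩ Wof G (C₂.erase α)) (phi2 τ₁ * k * t)
                (fun u =>
                  phi2 τ₁ * k * t ≤
                    ((NgoodP E G k t u ∩ Wof G (C₂.erase α)).card : ℝ) ∧
                  phi2 τ₁ * k * t ≤
                    ((NgoodM E G k t u ∩ Wof G (C₂.erase α)).card : ℝ))) →
            ∃ C₃ : Finset (Fin (sigma1 * k * t)), C₃ ⊆ C₂ ∧
              (C₂.card : ℝ) / (6 ^ 4 * (rho : ℝ) ^ 4) ≤ (C₃.card : ℝ) ∧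
              ∀ α ∈ C₃, ∀ s ∈ G.S α,
                ManyIn (NokayP E G s ∩ Wof G (C₃.erase α)) (phi3 τ₁ * k * t)
                  (fun u =>
                    ManyIn (NgoodP E G k t u ∩ Wof G (C₃.erase α)) (phi3 τ₁ * k * t)
                      (fun v => phi3 τ₁ * k * t ≤
                        ((NgoodM E G k t v ∩ Wof G (C₃.erase α)).card : ℝ)) ∧
                    ManyIn (NgoodM E G k t u ∩ Wof G (C₃.erase α)) (phi3 τ₁ * k * t)
                      (fun v => phi3 τ₁ * k * t ≤
                        ((NgoodM E G k t v ∩ Wof G (C₃.erase α)).card : ℝ))) ∧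
                ManyIn (NokayM E G s ∩ Wof G (C₃.erase α)) (phi3 τ₁ * k * t)
                  (fun u =>
                    ManyIn (NgoodP E G k t u ∩ Wof G (C₃.erase α)) (phi3 τ₁ * k * t)
                      (fun v => phi3 τ₁ * k * t ≤
                        ((NgoodM E G k t v ∩ Wof G (C₃.erase α)).card : ℝ)) ∧
                    ManyIn (NgoodM E G k t u ∩ Wof G (C₃.erase α)) (phi3 τ₁ * k * t)
                      (fun v => phi3 τ₁ * k * t ≤
                        ((NgoodM E G k t v ∩ Wof G (C₃.erase α)).card : ℝ))) := by
  classical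
  refine ⟨1, ?_⟩
  intro τ₁ k t hCτ hCk ht V _ _ E _ _hT _hconn G hG hG2 C₂ hyp
  -- Numeric preliminaries
  have hτ1 : 1 ≤ τ₁ := hCτ
  have hk1 : 1 ≤ k := le_trans (by simpa using hCτ) (by simpa using hCk)
  have ht1 : 1 ≤ t := le_trans (by norm_num) ht
  have hrhoR : ((rho : ℕ) : ℝ) = 10 ^ 4 := by norm_num [rho]
  have hτR : (1 : ℝ) ≤ (τ₁ : ℝ) := by exact_mod_cast hτ1
  have hkR : (1 : ℝ) ≤ (k : ℝ) := by exact_mod_cast hk1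
  have htR : (1 : ℝ) ≤ (t : ℝ) := by exact_mod_cast ht1
  have hphi3eq : phi3 τ₁ = (τ₁ : ℝ) / (4 * (2 ^ 6 * 10 ^ 4) * (2 ^ 14 * (10 ^ 4) ^ 2)
      * (2 ^ 14 * (10 ^ 4) ^ 2)) := by
    unfold phi3 phi2 phi1 phi0
    rw [hrhoR, div_div, div_div, div_div]
    ring
  have hphi2eq : phi2 τ₁ = (τ₁ : ℝ) / (4 * (2 ^ 6 * 10 ^ 4) * (2 ^ 14 * (10 ^ 4) ^ 2)) := by
    unfold phi2 phi1 phi0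
    rw [hrhoR, div_div, div_div]
    ring
  have hτpos : (0 : ℝ) < (τ₁ : ℝ) := by linarith
  have hphi3pos : 0 < phi3 τ₁ := by
    rw [hphi3eq]
    positivity
  have h3pos : 0 < phi3 τ₁ * k * t := by positivity
  have hktnn : (0 : ℝ) ≤ (k : ℝ) * (t : ℝ) := by positivity
  have h32 : 2 * (phi3 τ₁ * k * t) ≤ phi2 τ₁ * k * t := by
    have h1 : 2 * phi3 τ₁ ≤ phi2 τ₁ := by
      have hx2 : 0 ≤ phi2 τ₁ := by
        rw [hphi2eq]
        positivity
      have h3e : phi3 τ₁ = phi2 τ₁ / (2 ^ 14 * (10 ^ 4 : ℝ) ^ 2) := by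
        unfold phi3
        rw [hrhoR]
      have hD : phi2 τ₁ / (2 ^ 14 * (10 ^ 4 : ℝ) ^ 2) ≤ phi2 τ₁ / 2 := by
        apply div_le_div_of_nonneg_left hx2 (by norm_num) (by norm_num)
      rw [h3e]
      linarith
    calc 2 * (phi3 τ₁ * k * t) = (2 * phi3 τ₁) * ((k : ℝ) * (t : ℝ)) := by ring
      _ ≤ phi2 τ₁ * ((k : ℝ) * (t : ℝ)) := mul_le_mul_of_nonneg_right h1 hktnn
      _ = phi2 τ₁ * k * t := by ring
  have h3T : 4 * (phi3 τ₁ * k * t) ≤ ((τ₁ * k * t : ℕ) : ℝ) := by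
    have h1 : 4 * phi3 τ₁ ≤ (τ₁ : ℝ) := by
      have hD : (τ₁ : ℝ) / (4 * (2 ^ 6 * 10 ^ 4) * (2 ^ 14 * (10 ^ 4) ^ 2)
          * (2 ^ 14 * (10 ^ 4) ^ 2)) ≤ (τ₁ : ℝ) / 4 := by
        apply div_le_div_of_nonneg_left (le_of_lt hτpos) (by norm_num) (by norm_num)
      rw [hphi3eq]
      linarith
    push_cast
    calc 4 * (phi3 τ₁ * k * t) = (4 * phi3 τ₁) * ((k : ℝ) * (t : ℝ)) := by ring
      _ ≤ (τ₁ : ℝ) * ((k : ℝ) * (t : ℝ)) := mul_le_mul_of_nonneg_right h1 hktnn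
      _ = (τ₁ : ℝ) * k * t := by ring
  have hG1 := hG.1
  have hG8' : ∀ u ∈ Vokay G, ((τ₁ * k * t : ℕ) : ℝ) / 2 ≤ ((NgoodM E G k t u).card : ℝ) :=
    fun u hu => le_trans (le_max_right _ _) (hG2.2.2.1 u hu)
  by_cases hN0 : C₂.card = 0
  · refine ⟨∅, empty_subset _, ?_, by simp⟩
    rw [hN0]
    norm_num
  by_cases hNc : C₂.card ≤ 648 * rho ^ 4
  · -- small case: a singleton works
    obtain ⟨α₀, hα₀⟩ := card_pos.mp (Nat.pos_of_ne_zero hN0)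
    have hMb0 : ∀ β ∈ C₂.erase α₀,
        ((((C₂.erase α₀).powersetCard 0).filter fun D => β ∈ D).card : ℝ) ≤ (0 : ℝ) := by
      intro β _
      have he : (((C₂.erase α₀).powersetCard 0).filter fun D => β ∈ D) = ∅ := by
        rw [powersetCard_zero]
        ext D
        simp only [mem_filter, mem_singleton, notMem_empty, iff_false, not_and]
        intro hDe
        subst hDe
        exact notMem_empty β
      rw [he]
      simp
    have hper := perAlpha E G k t hG1 (C₂.erase α₀) 0 0 le_rfl hMb0
      (phi2 τ₁ * k * t) (phi3 τ₁ * k * t) ((τ₁ * k * t : ℕ) : ℝ) h3pos h32 h3T hG8'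
      α₀ (hG.2.1 α₀).1 (hyp α₀ hα₀)
    have hconc : ConclP E G k t (phi3 τ₁ * k * t) (Wof G (∅ : Finset (Fin (sigma1 * k * t)))) α₀ := by
      by_contra hnc
      have hmem : (∅ : Finset (Fin (sigma1 * k * t))) ∈
          ((C₂.erase α₀).powersetCard 0).filter
            (fun D => ¬ ConclP E G k t (phi3 τ₁ * k * t) (Wof G D) α₀) := by
        refine mem_filter.mpr ⟨?_, hnc⟩
        rw [powersetCard_zero]
        exact mem_singleton_self _
      have h1 : 1 ≤ (((C₂.erase α₀).powersetCard 0).filter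
          (fun D => ¬ ConclP E G k t (phi3 τ₁ * k * t) (Wof G D) α₀)).card :=
        card_pos.mpr ⟨_, hmem⟩
      have h1' : (1 : ℝ) ≤ (((C₂.erase α₀).powersetCard 0).filter
          (fun D => ¬ ConclP E G k t (phi3 τ₁ * k * t) (Wof G D) α₀)).card := by
        exact_mod_cast h1
      have hper0 : ((((C₂.erase α₀).powersetCard 0).filter
          (fun D => ¬ ConclP E G k t (phi3 τ₁ * k * t) (Wof G D) α₀)).card : ℝ) ≤ 0 := by
        simpa using hper
      linarith
    refine ⟨{α₀}, singleton_subset_iff.mpr hα₀, ?_, ?_⟩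
    · rw [card_singleton]
      rw [div_le_iff₀ (by positivity)]
      have hN : (C₂.card : ℝ) ≤ 648 * 10 ^ 16 := by
        have : (C₂.card : ℝ) ≤ ((648 * rho ^ 4 : ℕ) : ℝ) := by exact_mod_cast hNc
        rw [show ((648 * rho ^ 4 : ℕ) : ℝ) = 648 * 10 ^ 16 by norm_num [rho]] at this
        exact this
      have h6rho : ((1 : ℕ) : ℝ) * (6 ^ 4 * ((rho : ℕ) : ℝ) ^ 4) = 12960000000000000000 := by
        rw [hrhoR]
        norm_num
      rw [h6rho]
      linarith
    · intro α hα
      rw [mem_singleton] at hα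
      have hgoal : ConclP E G k t (phi3 τ₁ * k * t)
          (Wof G (({α₀} : Finset (Fin (sigma1 * k * t))).erase α₀)) α₀ := by
        rw [Finset.erase_singleton]
        exact hconc
      subst hα
      exact hgoal
  · -- main case
    push_neg at hNc
    have hNcL : 6480000000000000000 < C₂.card := by
      have : (648 * rho ^ 4 : ℕ) = 6480000000000000000 := by norm_num [rho]
      omega
    set N := C₂.card with hNdef
    obtain ⟨m, hmdef⟩ : ∃ m : ℕ, m = (N - 1) / 6480000000000000000 + 1 := ⟨_, rfl⟩
    have hm2 : 2 ≤ m := by omega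
    have hmN : m ≤ N := by omega
    have hNm : N ≤ 6480000000000000000 * m := by omega
    have h64 : 640000 * (m - 1) ≤ N - 1 := by omega
    -- binomial identities
    have hid1 : N * (N - 1).choose (m - 1) = N.choose m * m := by
      have h := Nat.add_one_mul_choose_eq (N - 1) (m - 1)
      have e1 : N - 1 + 1 = N := by omega
      have e2 : m - 1 + 1 = m := by omega
      rwa [e1, e2] at h
    have hid2 : (N - 1) * (N - 2).choose (m - 2) = (N - 1).choose (m - 1) * (m - 1) := by
      have h := Nat.add_one_mul_choose_eq (N - 2) (m - 2)
      have e1 : N - 2 + 1 = N - 1 := by omega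
      have e2 : m - 2 + 1 = m - 1 := by omega
      rwa [e1, e2] at h
    have hkeyN : 64 * rho * (N * (N - 2).choose (m - 2)) ≤ m * N.choose m := by
      have hstep : 64 * rho * (N * (N - 2).choose (m - 2)) * (m - 1)
          ≤ m * N.choose m * (m - 1) := by
        have hrho64 : 64 * rho * (m - 1) ≤ N - 1 := by
          rw [show (64 * rho : ℕ) = 640000 from by norm_num [rho]]
          omega
        calc 64 * rho * (N * (N - 2).choose (m - 2)) * (m - 1)
            = N * (64 * rho * (m - 1)) * (N - 2).choose (m - 2) := by ring
          _ ≤ N * (N - 1) * (N - 2).choose (m - 2) :=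
              Nat.mul_le_mul_right _ (Nat.mul_le_mul_left N hrho64)
          _ = N * ((N - 1) * (N - 2).choose (m - 2)) := by ring
          _ = N * ((N - 1).choose (m - 1) * (m - 1)) := by rw [hid2]
          _ = (N * (N - 1).choose (m - 1)) * (m - 1) := by ring
          _ = N.choose m * m * (m - 1) := by rw [hid1]
          _ = m * N.choose m * (m - 1) := by ring
      exact Nat.le_of_mul_le_mul_right hstep (by omega)
    -- the ensemble of candidate families
    have h𝒫ne : (C₂.powersetCard m).Nonempty := powersetCard_nonempty.mpr hmN
    have h𝒫card : (C₂.powersetCard m).card = N.choose m := card_powersetCard m C₂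
    -- exchange the double count
    have hexch : ∑ C' ∈ C₂.powersetCard m,
        (C'.filter fun α => ¬ ConclP E G k t (phi3 τ₁ * k * t) (Wof G (C'.erase α)) α).card
        = ∑ α ∈ C₂, ((C₂.powersetCard m).filter fun C' =>
            α ∈ C' ∧ ¬ ConclP E G k t (phi3 τ₁ * k * t) (Wof G (C'.erase α)) α).card := by
      have h1 : ∀ C' ∈ C₂.powersetCard m,
          (C'.filter fun α => ¬ ConclP E G k t (phi3 τ₁ * k * t) (Wof G (C'.erase α)) α).card
          = ∑ α ∈ C₂, if α ∈ C' ∧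
              ¬ ConclP E G k t (phi3 τ₁ * k * t) (Wof G (C'.erase α)) α then 1 else 0 := by
        intro C' hC'
        have hsub : C' ⊆ C₂ := (mem_powersetCard.mp hC').1
        rw [card_filter]
        calc ∑ α ∈ C', (if ¬ ConclP E G k t (phi3 τ₁ * k * t) (Wof G (C'.erase α)) α
              then 1 else 0)
            = ∑ α ∈ C', (if α ∈ C' ∧
                ¬ ConclP E G k t (phi3 τ₁ * k * t) (Wof G (C'.erase α)) α then 1 else 0) :=
              Finset.sum_congr rfl fun α hα => by simp [hα]
          _ = ∑ α ∈ C₂, (if α ∈ C' ∧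
                ¬ ConclP E G k t (phi3 τ₁ * k * t) (Wof G (C'.erase α)) α then 1 else 0) :=
              Finset.sum_subset hsub fun α _ hnα => by simp [hnα]
      rw [Finset.sum_congr rfl h1, Finset.sum_comm]
      exact Finset.sum_congr rfl fun α _ => (card_filter _ _).symm
    -- per-index bound
    have hperα : ∀ α ∈ C₂, (((C₂.powersetCard m).filter fun C' =>
        α ∈ C' ∧ ¬ ConclP E G k t (phi3 τ₁ * k * t) (Wof G (C'.erase α)) α).card : ℝ)
        ≤ 32 * (rho : ℝ) * ((N - 2).choose (m - 2) : ℝ) := by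
      intro α hα
      have hinj : ((C₂.powersetCard m).filter fun C' =>
          α ∈ C' ∧ ¬ ConclP E G k t (phi3 τ₁ * k * t) (Wof G (C'.erase α)) α).card
          ≤ (((C₂.erase α).powersetCard (m - 1)).filter fun D =>
            ¬ ConclP E G k t (phi3 τ₁ * k * t) (Wof G D) α).card := by
        apply card_le_card_of_injOn (fun C' => C'.erase α)
        · intro C' hC'
          have hC𝒫 := (mem_filter.mp hC').1
          have hαC' := (mem_filter.mp hC').2.1
          have hnc := (mem_filter.mp hC').2.2
          refine mem_filter.mpr ⟨mem_powersetCard.mpr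
            ⟨erase_subset_erase α (mem_powersetCard.mp hC𝒫).1, ?_⟩, hnc⟩
          rw [card_erase_of_mem hαC', (mem_powersetCard.mp hC𝒫).2]
        · intro a ha b hb hab
          have hab' : a.erase α = b.erase α := hab
          have hαa : α ∈ a := ((mem_filter.mp (mem_coe.mp ha)).2).1
          have hαb : α ∈ b := ((mem_filter.mp (mem_coe.mp hb)).2).1
          rw [← insert_erase hαa, ← insert_erase hαb, hab']
      have hMb : ∀ β ∈ C₂.erase α,
          ((((C₂.erase α).powersetCard (m - 1)).filter fun D => β ∈ D).card : ℝ)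
          ≤ ((N - 2).choose (m - 2) : ℝ) := by
        intro β hβ
        have h := card_filter_mem_powersetCard_le (C₂.erase α) (m - 1) β hβ
        have e1 : (C₂.erase α).card - 1 = N - 2 := by
          rw [card_erase_of_mem hα]
          omega
        have e2 : m - 1 - 1 = m - 2 := by omega
        rw [e1, e2] at h
        exact_mod_cast h
      have hper := perAlpha E G k t hG1 (C₂.erase α) (m - 1)
        ((N - 2).choose (m - 2) : ℝ) (Nat.cast_nonneg _) hMb
        (phi2 τ₁ * k * t) (phi3 τ₁ * k * t) ((τ₁ * k * t : ℕ) : ℝ) h3pos h32 h3T hG8'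
        α (hG.2.1 α).1 (hyp α hα)
      calc (((C₂.powersetCard m).filter fun C' =>
          α ∈ C' ∧ ¬ ConclP E G k t (phi3 τ₁ * k * t) (Wof G (C'.erase α)) α).card : ℝ)
          ≤ ((((C₂.erase α).powersetCard (m - 1)).filter fun D =>
            ¬ ConclP E G k t (phi3 τ₁ * k * t) (Wof G D) α).card : ℝ) := by
            exact_mod_cast hinj
        _ ≤ 32 * (rho : ℝ) * ((N - 2).choose (m - 2) : ℝ) := hper
    -- total bound and choice of a good family
    have htot : (∑ C' ∈ C₂.powersetCard m,
        ((C'.filter fun α =>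
          ¬ ConclP E G k t (phi3 τ₁ * k * t) (Wof G (C'.erase α)) α).card : ℝ))
        ≤ (N : ℝ) * (32 * (rho : ℝ) * ((N - 2).choose (m - 2) : ℝ)) := by
      have hcast : (∑ C' ∈ C₂.powersetCard m,
          ((C'.filter fun α =>
            ¬ ConclP E G k t (phi3 τ₁ * k * t) (Wof G (C'.erase α)) α).card : ℝ))
          = ∑ α ∈ C₂, (((C₂.powersetCard m).filter fun C' =>
            α ∈ C' ∧ ¬ ConclP E G k t (phi3 τ₁ * k * t) (Wof G (C'.erase α)) α).card : ℝ) := by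
        exact_mod_cast congrArg (Nat.cast : ℕ → ℝ) hexch
      rw [hcast]
      calc ∑ α ∈ C₂, (((C₂.powersetCard m).filter fun C' =>
          α ∈ C' ∧ ¬ ConclP E G k t (phi3 τ₁ * k * t) (Wof G (C'.erase α)) α).card : ℝ)
          ≤ ∑ _α ∈ C₂, 32 * (rho : ℝ) * ((N - 2).choose (m - 2) : ℝ) := sum_le_sum hperα
        _ = (N : ℝ) * (32 * (rho : ℝ) * ((N - 2).choose (m - 2) : ℝ)) := by
            rw [sum_const, nsmul_eq_mul]
    have hex : ∃ C' ∈ C₂.powersetCard m,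
        ((C'.filter fun α =>
          ¬ ConclP E G k t (phi3 τ₁ * k * t) (Wof G (C'.erase α)) α).card : ℝ) ≤ (m : ℝ) / 2 := by
      by_contra hno
      push_neg at hno
      have hlt := Finset.sum_lt_sum_of_nonempty h𝒫ne fun C' hC' => hno C' hC'
      rw [sum_const, nsmul_eq_mul, h𝒫card] at hlt
      have hkeyR : (N : ℝ) * (32 * (rho : ℝ) * ((N - 2).choose (m - 2) : ℝ))
          ≤ (N.choose m : ℝ) * ((m : ℝ) / 2) := by
        have h1 : ((64 * rho * (N * (N - 2).choose (m - 2)) : ℕ) : ℝ)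
            ≤ ((m * N.choose m : ℕ) : ℝ) := Nat.cast_le.mpr hkeyN
        push_cast at h1
        linarith
      linarith
    obtain ⟨C', hC'𝒫, hC'count⟩ := hex
    have hC'sub : C' ⊆ C₂ := (mem_powersetCard.mp hC'𝒫).1
    have hC'card : C'.card = m := (mem_powersetCard.mp hC'𝒫).2
    refine ⟨C'.filter fun α => ConclP E G k t (phi3 τ₁ * k * t) (Wof G (C'.erase α)) α,
      (filter_subset _ _).trans hC'sub, ?_, ?_⟩
    · -- cardinality bound
      have hsum := card_filter_add_card_filter_not (s := C')
        (p := fun α => ConclP E G k t (phi3 τ₁ * k * t) (Wof G (C'.erase α)) α)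
      have hsum' : ((C'.filter fun α =>
          ConclP E G k t (phi3 τ₁ * k * t) (Wof G (C'.erase α)) α).card : ℝ)
          + ((C'.filter fun α =>
            ¬ ConclP E G k t (phi3 τ₁ * k * t) (Wof G (C'.erase α)) α).card : ℝ)
          = (m : ℝ) := by
        rw [← hC'card]
        exact_mod_cast hsum
      have hhalf : (m : ℝ) / 2 ≤ ((C'.filter fun α =>
          ConclP E G k t (phi3 τ₁ * k * t) (Wof G (C'.erase α)) α).card : ℝ) := by
        linarith
      rw [div_le_iff₀ (by positivity)]
      have hNmR : (N : ℝ) ≤ 6480000000000000000 * (m : ℝ) := by exact_mod_cast hNm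
      have h6ρ : (6 : ℝ) ^ 4 * ((rho : ℕ) : ℝ) ^ 4 = 12960000000000000000 := by
        rw [hrhoR]
        norm_num
      rw [h6ρ]
      nlinarith [hhalf, hNmR]
    · -- the conclusion for each α
      intro α hα
      have hαC' : α ∈ C' := mem_of_mem_filter α hα
      have hc := (mem_filter.mp hα).2
      have hsub : (C'.filter fun β =>
          ConclP E G k t (phi3 τ₁ * k * t) (Wof G (C'.erase β)) β).erase α ⊆ C'.erase α :=
        erase_subset_erase _ (filter_subset _ _)
      exact conclP_mono E G k t (Wof_anti G hsub) hc

end TournamentPartition
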